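/- Fix r, T > 0 with 2rT < z̃², where z̃ is the unique positive solution of z sinh z = cosh z. Set γ = √(2(r + 1/T)) and define ℓ : [√T, ∞) → ℝ by ℓ(b) = γ sinh(γ(b−√T)) · [ b cosh(√(2rT)) − (1/√(2r)) sinh(√(2rT)) − (b−√T)/(rT+1) − e^{−γ(b−√T)}/(γ(rT+1)) ] + cosh(γ(b−√T)) · [ √(2r) · b · sinh(√(2rT)) − cosh(√(2rT)) + (1 − e^{−γ(b−√T)})/(rT+1) ]. Then there exists a unique b* ∈ (√T, ∞) with ℓ(b*) = 0. -/

import Mathlib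

open Real

lemma aux_sinh_nonneg {t : ℝ} (ht : 0 ≤ t) : 0 ≤ Real.sinh t := by
  rw [Real.sinh_eq]
  have := Real.exp_le_exp.2 (neg_le_self ht)
  linarith

lemma aux_sinh_le {t : ℝ} (ht : 0 ≤ t) : Real.sinh t ≤ t * Real.cosh t := by
  have key : MonotoneOn (fun t => t * Real.cosh t - Real.sinh t) (Set.Ici 0) := by
    have hd : ∀ x : ℝ, HasDerivAt (fun t => t * Real.cosh t - Real.sinh t)
        (x * Real.sinh x) x := by
      intro x
      have := ((hasDerivAt_id x).mul (Real.hasDerivAt_cosh x)).sub (Real.hasDerivAt_sinh x)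
      refine this.congr_deriv (Eq.symm ?_)
      simp only [id_eq]; ring
    apply monotoneOn_of_deriv_nonneg (convex_Ici 0)
    · exact ((continuous_id.mul Real.continuous_cosh).sub Real.continuous_sinh).continuousOn
    · exact fun x _ => (hd x).differentiableAt.differentiableWithinAt
    · intro x hx
      rw [interior_Ici] at hx
      rw [(hd x).deriv]
      exact mul_nonneg (le_of_lt hx) (aux_sinh_nonneg (le_of_lt hx))
  have h0 := key (Set.self_mem_Ici) (Set.mem_Ici.2 ht) ht
  simp at h0
  linarith

lemma aux_strictMono : StrictMonoOn (fun t => t * Real.sinh t - Real.cosh t) (Set.Ici 0) := by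
  have hd : ∀ x : ℝ, HasDerivAt (fun t => t * Real.sinh t - Real.cosh t)
      (x * Real.cosh x) x := by
    intro x
    have := ((hasDerivAt_id x).mul (Real.hasDerivAt_sinh x)).sub (Real.hasDerivAt_cosh x)
    refine this.congr_deriv (Eq.symm ?_)
    simp only [id_eq]; ring
  apply strictMonoOn_of_deriv_pos (convex_Ici 0)
  · exact ((continuous_id.mul Real.continuous_sinh).sub Real.continuous_cosh).continuousOn
  · intro x hx
    rw [interior_Ici] at hx
    rw [(hd x).deriv]
    exact mul_pos hx (Real.cosh_pos x)

set_option maxHeartbeats 1000000 in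
/-- Fix r, T > 0 with 2rT < z̃², where z̃ is the unique positive
solution of z sinh z = cosh z. With γ = √(2(r + 1/T)) and ℓ the smooth-fit
function from Example 5.3, there exists a unique b* ∈ (√T, ∞) with ℓ(b*) = 0. -/
theorem smooth_fit_function_has_unique_zero
    (r T : ℝ) (hr : 0 < r) (hT : 0 < T)
    (z : ℝ) (hz_pos : 0 < z) (hz_root : z * Real.sinh z = Real.cosh z)
    (hrT : 2 * r * T < z ^ 2)
    (γ : ℝ) (hγ : γ = Real.sqrt (2 * (r + 1 / T)))
    (ℓ : ℝ → ℝ)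
    (hℓ : ∀ b : ℝ, ℓ b =
      γ * Real.sinh (γ * (b - Real.sqrt T)) *
        (b * Real.cosh (Real.sqrt (2 * r * T))
          - (1 / Real.sqrt (2 * r)) * Real.sinh (Real.sqrt (2 * r * T))
          - (b - Real.sqrt T) / (r * T + 1)
          - Real.exp (-(γ * (b - Real.sqrt T))) / (γ * (r * T + 1)))
      + Real.cosh (γ * (b - Real.sqrt T)) *
        (Real.sqrt (2 * r) * b * Real.sinh (Real.sqrt (2 * r * T))
          - Real.cosh (Real.sqrt (2 * r * T))
          + (1 - Real.exp (-(γ * (b - Real.sqrt T)))) / (r * T + 1))) :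
    ∃! b : ℝ, Real.sqrt T < b ∧ ℓ b = 0 := by
  have hℓe : ℓ = fun b => γ * Real.sinh (γ * (b - Real.sqrt T)) *
        (b * Real.cosh (Real.sqrt (2 * r * T))
          - (1 / Real.sqrt (2 * r)) * Real.sinh (Real.sqrt (2 * r * T))
          - (b - Real.sqrt T) / (r * T + 1)
          - Real.exp (-(γ * (b - Real.sqrt T))) / (γ * (r * T + 1)))
      + Real.cosh (γ * (b - Real.sqrt T)) *
        (Real.sqrt (2 * r) * b * Real.sinh (Real.sqrt (2 * r * T))
          - Real.cosh (Real.sqrt (2 * r * T))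
          + (1 - Real.exp (-(γ * (b - Real.sqrt T)))) / (r * T + 1)) := funext hℓ
  subst hℓe
  set s : ℝ := Real.sqrt T with hs
  set u : ℝ := Real.sqrt (2 * r * T) with hudef
  set δ : ℝ := Real.sqrt (2 * r) with hδdef
  set C : ℝ := Real.cosh u with hCdef
  set S : ℝ := Real.sinh u with hSdef
  have hδpos : 0 < δ := Real.sqrt_pos.2 (by positivity)
  have hδ2 : δ ^ 2 = 2 * r := Real.sq_sqrt (by positivity)
  have hγpos : 0 < γ := by rw [hγ]; exact Real.sqrt_pos.2 (by positivity)
  have hγ2 : γ ^ 2 = 2 * r + 2 / T := by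
    rw [hγ, Real.sq_sqrt (by positivity)]; ring
  have hk : (0:ℝ) < r * T + 1 := by positivity
  have hspos : 0 < s := Real.sqrt_pos.2 hT
  have hδs : δ * s = u := by
    rw [hδdef, hs, hudef, ← Real.sqrt_mul (by positivity)]
  have hunn : 0 ≤ u := Real.sqrt_nonneg _
  have hS0 : 0 ≤ S := aux_sinh_nonneg hunn
  have hC1 : 1 ≤ C := Real.one_le_cosh u
  have hTne : T ≠ 0 := ne_of_gt hT
  have h2rs : 0 < 2 * r * s := by positivity
  -- scalar facts
  have e1 : γ ^ 2 / (r * T + 1) = 2 / T := by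
    rw [hγ2, div_eq_div_iff (ne_of_gt hk) hTne]; field_simp
  have e2 : δ * S - γ ^ 2 * (S / δ) = -(2 / T) * (S / δ) := by
    have hδS : δ * S = δ ^ 2 * (S / δ) := by field_simp
    rw [hδS, hδ2, hγ2]; ring
  -- the derivative
  set D : ℝ → ℝ := fun b => Real.cosh (γ * (b - s)) *
      (γ ^ 2 * (b * C - (1 / δ) * S - (b - s) / (r * T + 1)) + δ * S)
      + γ * δ * b * S * Real.sinh (γ * (b - s)) with hDdef
  have hder : ∀ b : ℝ, HasDerivAt (fun b => γ * Real.sinh (γ * (b - s)) *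
        (b * C - (1 / δ) * S - (b - s) / (r * T + 1)
          - Real.exp (-(γ * (b - s))) / (γ * (r * T + 1)))
      + Real.cosh (γ * (b - s)) *
        (δ * b * S - C + (1 - Real.exp (-(γ * (b - s)))) / (r * T + 1))) (D b) b := by
    intro b
    have hx : HasDerivAt (fun b : ℝ => γ * (b - s)) γ b := by
      simpa using ((hasDerivAt_id b).sub_const s).const_mul γ
    have hA : HasDerivAt (fun b => b * C - (1 / δ) * S - (b - s) / (r * T + 1)
        - Real.exp (-(γ * (b - s))) / (γ * (r * T + 1)))
        ((1 : ℝ) * C - 1 / (r * T + 1)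
          - Real.exp (-(γ * (b - s))) * (-γ) / (γ * (r * T + 1))) b := by
      exact ((((hasDerivAt_id b).mul_const C).sub_const ((1 / δ) * S)).sub
        (((hasDerivAt_id b).sub_const s).div_const (r * T + 1))).sub
        ((hx.neg.exp).div_const (γ * (r * T + 1)))
    have hB : HasDerivAt (fun b => δ * b * S - C + (1 - Real.exp (-(γ * (b - s)))) / (r * T + 1))
        ((δ * 1) * S + (0 - Real.exp (-(γ * (b - s))) * (-γ)) / (r * T + 1)) b := by
      exact ((((hasDerivAt_id b).const_mul δ).mul_const S).sub_const C).add
        (((hasDerivAt_const b (1:ℝ)).sub hx.neg.exp).div_const (r * T + 1))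
    have hraw := ((hx.sinh.const_mul γ).mul hA).add (hx.cosh.mul hB)
    refine hraw.congr_deriv (Eq.symm ?_)
    have hE2 : γ * (Real.exp (-(γ * (b - s))) / (γ * (r * T + 1)))
        = Real.exp (-(γ * (b - s))) / (r * T + 1) := by
      rw [mul_div_assoc']
      rw [mul_div_mul_left _ _ (ne_of_gt hγpos)]
    rw [hDdef]
    linear_combination (γ * Real.cosh (γ * (b - s)) - γ * Real.sinh (γ * (b - s))) * hE2
  -- lower bound for the derivative
  have hSdiv : S / δ ≤ s * C := by
    rw [div_le_iff₀ hδpos]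
    have := aux_sinh_le hunn
    calc S ≤ u * C := this
      _ = s * C * δ := by rw [← hδs]; ring
  have hbra : ∀ b : ℝ, s ≤ b → 2 * r * s ≤ D b := by
    intro b hb
    have hb0 : 0 < b := lt_of_lt_of_le hspos hb
    have hX0 : 0 ≤ Real.sinh (γ * (b - s)) :=
      aux_sinh_nonneg (mul_nonneg hγpos.le (sub_nonneg.2 hb))
    have hY1 : 1 ≤ Real.cosh (γ * (b - s)) := Real.one_le_cosh _
    have hterm2 : 0 ≤ γ * δ * b * S * Real.sinh (γ * (b - s)) := by
      apply mul_nonneg (mul_nonneg (mul_nonneg (mul_nonneg hγpos.le hδpos.le) hb0.le) hS0) hX0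
    set bra : ℝ := γ ^ 2 * (b * C - (1 / δ) * S - (b - s) / (r * T + 1)) + δ * S with hbradef
    have hid : bra = γ ^ 2 * b * C - (2 / T) * (S / δ + (b - s)) := by
      rw [hbradef]; linear_combination e2 - (b - s) * e1
    have hp : 0 ≤ b * C - S / δ - b + s := by
      nlinarith [hSdiv, mul_nonneg (sub_nonneg.2 hb) (sub_nonneg.2 hC1)]
    have hbrlb : 2 * r * b * C ≤ bra := by
      rw [hid, hγ2]
      have h2T : (0:ℝ) ≤ 2 / T := by positivity
      nlinarith [mul_nonneg h2T hp]
    have hbr0 : 0 ≤ bra := le_trans (mul_nonneg (mul_nonneg (mul_nonneg (by norm_num : (0:ℝ) ≤ 2) hr.le) hb0.le) (le_trans zero_le_one hC1)) hbrlb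
    have h1 : 2 * r * s ≤ 2 * r * b * C := by nlinarith [hb, hC1, hr, hspos, mul_nonneg (mul_nonneg (by norm_num : (0:ℝ) ≤ 2) hr.le) (mul_nonneg hb0.le (sub_nonneg.2 hC1))]
    have h2 : bra ≤ Real.cosh (γ * (b - s)) * bra := le_mul_of_one_le_left hbr0 hY1
    have hgoal : 2 * r * s ≤ Real.cosh (γ * (b - s)) * bra + γ * δ * b * S * Real.sinh (γ * (b - s)) := by
      linarith [le_trans (le_trans h1 hbrlb) h2]
    exact hgoal
  have hcont : Continuous (fun b => γ * Real.sinh (γ * (b - s)) *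
        (b * C - (1 / δ) * S - (b - s) / (r * T + 1)
          - Real.exp (-(γ * (b - s))) / (γ * (r * T + 1)))
      + Real.cosh (γ * (b - s)) *
        (δ * b * S - C + (1 - Real.exp (-(γ * (b - s)))) / (r * T + 1))) :=
    continuous_iff_continuousAt.2 fun b => (hder b).differentiableAt.continuousAt
  set F : ℝ → ℝ := fun b => γ * Real.sinh (γ * (b - s)) *
        (b * C - (1 / δ) * S - (b - s) / (r * T + 1)
          - Real.exp (-(γ * (b - s))) / (γ * (r * T + 1)))
      + Real.cosh (γ * (b - s)) *
        (δ * b * S - C + (1 - Real.exp (-(γ * (b - s)))) / (r * T + 1)) with hFdef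
  have hmono : StrictMonoOn F (Set.Ici s) := by
    apply strictMonoOn_of_deriv_pos (convex_Ici s) hcont.continuousOn
    intro x hx
    rw [interior_Ici] at hx
    rw [(hder x).deriv]
    exact lt_of_lt_of_le h2rs (hbra x (le_of_lt hx))
  -- value at s
  have hFs : F s = u * S - C := by
    rw [hFdef]
    simp only [sub_self, mul_zero, Real.sinh_zero, Real.cosh_zero, Real.exp_zero, neg_zero]
    rw [← hδs]; ring
  have hu_lt_z : u < z := by rw [hudef]; exact (Real.sqrt_lt' hz_pos).2 hrT
  have hFsneg : F s < 0 := by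
    rw [hFs]
    have := aux_strictMono (Set.mem_Ici.2 hunn) (Set.mem_Ici.2 hz_pos.le) hu_lt_z
    simp only [] at this
    rw [hSdef, hCdef]
    linarith [this, hz_root]
  -- a point where F is positive
  set b₁ : ℝ := s + (1 + |F s|) / (2 * r * s) with hb₁def
  have hb₁gt : s < b₁ := by
    rw [hb₁def]
    have : 0 < (1 + |F s|) / (2 * r * s) := div_pos (by positivity) h2rs
    linarith
  have hmonoG : MonotoneOn (fun b => F b - 2 * r * s * b) (Set.Ici s) := by
    apply monotoneOn_of_deriv_nonneg (convex_Ici s)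
    · show ContinuousOn (fun b => F b - 2 * r * s * b) (Set.Ici s)
      exact (hcont.sub (continuous_const.mul continuous_id)).continuousOn
    · intro x _
      exact ((hder x).sub ((hasDerivAt_id x).const_mul (2 * r * s))).differentiableAt.differentiableWithinAt
    · intro x hx
      rw [interior_Ici] at hx
      have hdx : HasDerivAt (fun b => F b - 2 * r * s * b) (D x - 2 * r * s * 1) x :=
        (hder x).sub ((hasDerivAt_id x).const_mul (2 * r * s))
      rw [hdx.deriv]
      have := hbra x (le_of_lt hx)
      linarith
  have hFb₁ : 0 < F b₁ := by
    have h := hmonoG Set.self_mem_Ici (Set.mem_Ici.2 hb₁gt.le) hb₁gt.le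
    simp only [] at h
    have hval : 2 * r * s * (b₁ - s) = 1 + |F s| := by
      rw [hb₁def]; field_simp; ring
    have habs : -|F s| ≤ F s := neg_abs_le _
    nlinarith [h, hval, habs]
  -- existence by IVT
  have hIVT := intermediate_value_Ioo hb₁gt.le hcont.continuousOn
  have h0mem : (0:ℝ) ∈ Set.Ioo (F s) (F b₁) := ⟨hFsneg, hFb₁⟩
  obtain ⟨b₀, hb₀mem, hb₀⟩ := hIVT h0mem
  refine ⟨b₀, ⟨hb₀mem.1, hb₀⟩, ?_⟩
  rintro y ⟨hy1, hy2⟩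
  exact hmono.injOn (Set.mem_Ici.2 hy1.le) (Set.mem_Ici.2 hb₀mem.1.le) (by rw [hy2, hb₀])
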